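/- Let Φ be a Young function satisfying the Δ₂ condition and u ∈ L^Φ(ℝ^N). Then liminf_{t→0⁺} Φ(t)·|E_t|_{2N} ≥ 2ω_N ∫_{ℝ^N} Φ(|u(x)|) dx, where E_t = {(x,y) : x ≠ y, Φ(|u(x)-u(y)|) ≥ Φ(t)|x-y|^N}. -/

import Mathlib

open MeasureTheory Metric Set

private lemma convexMono {Φ : ℝ → ℝ} (hΦconv : ConvexOn ℝ (Ici 0) Φ)
    (hΦ0 : Φ 0 = 0) (hΦnn : ∀ s, 0 ≤ s → 0 ≤ Φ s) :
    ∀ a b : ℝ, 0 ≤ a → a ≤ b → Φ a ≤ Φ b := by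
  intro a b ha hab
  rcases eq_or_lt_of_le (ha.trans hab) with hb | hb
  · have ha0 : a = 0 := le_antisymm (hab.trans hb.symm.le) ha
    rw [ha0, ← hb]
  · have h1 : (0:ℝ) ≤ 1 - a / b := by
      have : a / b ≤ 1 := (div_le_one hb).2 hab
      linarith
    have h2 : (0:ℝ) ≤ a / b := div_nonneg ha hb.le
    have key := hΦconv.2 (self_mem_Ici (a := (0:ℝ))) (mem_Ici.2 (ha.trans hab))
      h1 h2 (by ring)
    simp only [smul_eq_mul, mul_zero, zero_add, hΦ0] at key
    rw [div_mul_cancel₀ a hb.ne'] at key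
    have hq : a / b ≤ 1 := (div_le_one hb).2 hab
    nlinarith [hΦnn b (ha.trans hab)]

set_option maxHeartbeats 2000000 in
theorem stmt10 (N : ℕ) (hN : 0 < N) (Φ : ℝ → ℝ)
    (hΦc : ContinuousOn Φ (Ici 0)) (hΦconv : ConvexOn ℝ (Ici 0) Φ)
    (hΦ0 : Φ 0 = 0) (hΦnn : ∀ s, 0 ≤ s → 0 ≤ Φ s)
    (hΔ2 : ∃ k > 0, ∀ s > (0:ℝ), Φ (2 * s) ≤ k * Φ s)
    (u : EuclideanSpace ℝ (Fin N) → ℝ) (hu : Measurable u)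
    (hfin : ∫⁻ x, ENNReal.ofReal (Φ (|u x|)) < ⊤) :
    2 * volume (ball (0 : EuclideanSpace ℝ (Fin N)) 1) *
        (∫⁻ x, ENNReal.ofReal (Φ (|u x|))) ≤
      Filter.liminf (fun t : ℝ => ENNReal.ofReal (Φ t) *
        volume {p : EuclideanSpace ℝ (Fin N) × EuclideanSpace ℝ (Fin N) |
          p.1 ≠ p.2 ∧ Φ t * dist p.1 p.2 ^ N ≤ Φ (|u p.1 - u p.2|)})
        (nhdsWithin 0 (Ioi 0)) := by
  haveI : Nonempty (Fin N) := ⟨⟨0, hN⟩⟩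
  haveI : Nontrivial (EuclideanSpace ℝ (Fin N)) := inferInstance
  have hω_top : volume (ball (0 : EuclideanSpace ℝ (Fin N)) 1) ≠ ⊤ :=
    measure_ball_lt_top.ne
  set ω : ENNReal := volume (ball (0 : EuclideanSpace ℝ (Fin N)) 1) with hωdef
  have hmono := convexMono hΦconv hΦ0 hΦnn
  set F : ℝ → ENNReal := fun t : ℝ => ENNReal.ofReal (Φ t) *
    volume {p : EuclideanSpace ℝ (Fin N) × EuclideanSpace ℝ (Fin N) |
      p.1 ≠ p.2 ∧ Φ t * dist p.1 p.2 ^ N ≤ Φ (|u p.1 - u p.2|)} with hFdef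
  -- trivial case: Φ vanishes identically on (0, ∞)
  by_cases hz : ∀ s : ℝ, 0 < s → Φ s = 0
  · have h0 : ∀ x, ENNReal.ofReal (Φ (|u x|)) = 0 := by
      intro x
      rcases (abs_nonneg (u x)).eq_or_lt with h | h
      · rw [← h, hΦ0]; simp
      · rw [hz _ h]; simp
    have hI0 : ∫⁻ x, ENNReal.ofReal (Φ (|u x|)) = 0 := by simp [h0]
    rw [hI0, mul_zero]
    exact zero_le
  push_neg at hz
  obtain ⟨s₀, hs₀, hΦs₀⟩ := hz
  have hΦs₀pos : 0 < Φ s₀ := (hΦnn s₀ hs₀.le).lt_of_ne (Ne.symm hΦs₀)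
  obtain ⟨k, hk, hΔ⟩ := hΔ2
  -- positivity of Φ on (0, ∞)
  have hpos : ∀ s : ℝ, 0 < s → 0 < Φ s := by
    intro s hs
    obtain ⟨n, hn⟩ : ∃ n : ℕ, s₀ ≤ 2 ^ n * s := by
      obtain ⟨n, hn⟩ := exists_nat_gt (s₀ / s)
      refine ⟨n, ?_⟩
      have h2n : (n : ℝ) ≤ 2 ^ n := by
        exact_mod_cast (Nat.lt_two_pow_self (n := n)).le
      have : s₀ / s < 2 ^ n := lt_of_lt_of_le hn h2n
      calc s₀ = (s₀ / s) * s := (div_mul_cancel₀ s₀ hs.ne').symm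
        _ ≤ 2 ^ n * s := by nlinarith
    have hiter : ∀ m : ℕ, Φ (2 ^ m * s) ≤ k ^ m * Φ s := by
      intro m
      induction m with
      | zero => simp
      | succ m ih =>
        have h1 : (2:ℝ) ^ (m + 1) * s = 2 * (2 ^ m * s) := by ring
        have h2 : Φ (2 * (2 ^ m * s)) ≤ k * Φ (2 ^ m * s) :=
          hΔ _ (by positivity)
        calc Φ (2 ^ (m + 1) * s) ≤ k * Φ (2 ^ m * s) := by rw [h1]; exact h2
          _ ≤ k * (k ^ m * Φ s) := by nlinarith
          _ = k ^ (m + 1) * Φ s := by ring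
    rcases (hΦnn s hs.le).eq_or_lt with h | h
    · exfalso
      have h1 : Φ s₀ ≤ Φ (2 ^ n * s) := hmono _ _ hs₀.le hn
      have h2 : Φ (2 ^ n * s) ≤ k ^ n * Φ s := hiter n
      rw [← h] at h2
      nlinarith
    · exact h
  -- continuity helpers
  have hcont : ∀ c : ℝ, 0 ≤ c → Continuous fun s : ℝ => Φ (c * |s|) := by
    intro c hc
    exact hΦc.comp_continuous (continuous_const.mul continuous_abs)
      (fun s => mul_nonneg hc (abs_nonneg s))
  have hcont1 : Continuous fun s : ℝ => Φ (|s|) := by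
    have := hcont 1 zero_le_one
    simpa using this
  have hmeasI : Measurable fun y : EuclideanSpace ℝ (Fin N) =>
      ENNReal.ofReal (Φ (|u y|)) := by
    have h1 : Measurable fun y : EuclideanSpace ℝ (Fin N) => Φ (|u y|) :=
      hcont1.measurable.comp hu
    exact h1.ennreal_ofReal
  -- the key sequential lemma
  have key : ∀ δ : ℝ, 0 < δ → δ < 1 → ∀ t : ℕ → ℝ, (∀ n, 0 < t n) →
      Filter.Tendsto t Filter.atTop (nhds 0) →
      2 * ω * (∫⁻ x, ENNReal.ofReal (Φ ((1 - δ) * |u x|))) ≤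
        Filter.liminf (fun n => F (t n)) Filter.atTop := by
    intro δ hδ0 hδ1 t ht htend
    have hfm : Measurable fun x : EuclideanSpace ℝ (Fin N) =>
        ENNReal.ofReal (Φ ((1 - δ) * |u x|)) := by
      have h1 : Measurable fun x : EuclideanSpace ℝ (Fin N) => Φ ((1 - δ) * |u x|) :=
        (hcont (1 - δ) (by linarith)).measurable.comp hu
      exact h1.ennreal_ofReal
    have hΦt0 : Filter.Tendsto (fun n => ENNReal.ofReal (Φ (t n))) Filter.atTop (nhds 0) := by
      have h1 : Filter.Tendsto t Filter.atTop (nhdsWithin 0 (Ici 0)) := by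
        rw [tendsto_nhdsWithin_iff]
        exact ⟨htend, Filter.Eventually.of_forall fun n => (ht n).le⟩
      have h2 : Filter.Tendsto (fun n => Φ (t n)) Filter.atTop (nhds (Φ 0)) :=
        (hΦc 0 self_mem_Ici).tendsto.comp h1
      rw [hΦ0] at h2
      have := ENNReal.tendsto_ofReal h2
      simpa using this
    set G : ℕ → Set (EuclideanSpace ℝ (Fin N) × EuclideanSpace ℝ (Fin N)) :=
      fun n => {p | |u p.2| ≤ δ * |u p.1| ∧ p.1 ≠ p.2 ∧
        Φ (t n) * dist p.1 p.2 ^ N ≤ Φ ((1 - δ) * |u p.1|)} with hGdef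
    have hm1 : Measurable fun p : EuclideanSpace ℝ (Fin N) × EuclideanSpace ℝ (Fin N) =>
        |u p.2| := (hu.comp measurable_snd).abs
    have hm2 : Measurable fun p : EuclideanSpace ℝ (Fin N) × EuclideanSpace ℝ (Fin N) =>
        δ * |u p.1| := measurable_const.mul (hu.comp measurable_fst).abs
    have hGm : ∀ n, MeasurableSet (G n) := by
      intro n
      have e1 : MeasurableSet {p : EuclideanSpace ℝ (Fin N) × EuclideanSpace ℝ (Fin N) |
          |u p.2| ≤ δ * |u p.1|} := measurableSet_le hm1 hm2
      have e2 : MeasurableSet {p : EuclideanSpace ℝ (Fin N) × EuclideanSpace ℝ (Fin N) |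
          p.1 ≠ p.2} := by
        have : MeasurableSet {p : EuclideanSpace ℝ (Fin N) × EuclideanSpace ℝ (Fin N) |
            p.1 = p.2} := (isClosed_eq continuous_fst continuous_snd).measurableSet
        exact this.compl
      have hm4 : Measurable fun p : EuclideanSpace ℝ (Fin N) × EuclideanSpace ℝ (Fin N) =>
          Φ (t n) * dist p.1 p.2 ^ N :=
        (continuous_const.mul (continuous_dist.pow N)).measurable
      have hm5 : Measurable fun p : EuclideanSpace ℝ (Fin N) × EuclideanSpace ℝ (Fin N) =>
          Φ ((1 - δ) * |u p.1|) :=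
        ((hcont (1 - δ) (by linarith)).measurable).comp (hu.comp measurable_fst)
      have e3 : MeasurableSet {p : EuclideanSpace ℝ (Fin N) × EuclideanSpace ℝ (Fin N) |
          Φ (t n) * dist p.1 p.2 ^ N ≤ Φ ((1 - δ) * |u p.1|)} := measurableSet_le hm4 hm5
      have : G n = {p | |u p.2| ≤ δ * |u p.1|} ∩ ({p | p.1 ≠ p.2} ∩
          {p | Φ (t n) * dist p.1 p.2 ^ N ≤ Φ ((1 - δ) * |u p.1|)}) := by
        ext p; simp [hGdef, Set.mem_setOf_eq, and_assoc]
      rw [this]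
      exact e1.inter (e2.inter e3)
    have h2vol : ∀ n, 2 * volume (G n) ≤
        volume {p : EuclideanSpace ℝ (Fin N) × EuclideanSpace ℝ (Fin N) |
          p.1 ≠ p.2 ∧ Φ (t n) * dist p.1 p.2 ^ N ≤ Φ (|u p.1 - u p.2|)} := by
      intro n
      have hsub1 : G n ⊆ {p : EuclideanSpace ℝ (Fin N) × EuclideanSpace ℝ (Fin N) |
          p.1 ≠ p.2 ∧ Φ (t n) * dist p.1 p.2 ^ N ≤ Φ (|u p.1 - u p.2|)} := by
        intro p hp
        obtain ⟨h1, h2, h3⟩ := hp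
        refine ⟨h2, h3.trans (hmono _ _ (mul_nonneg (by linarith) (abs_nonneg _)) ?_)⟩
        have hh := abs_sub_abs_le_abs_sub (u p.1) (u p.2)
        nlinarith [abs_nonneg (u p.1)]
      have hsub2 : Prod.swap ⁻¹' (G n) ⊆
          {p : EuclideanSpace ℝ (Fin N) × EuclideanSpace ℝ (Fin N) |
          p.1 ≠ p.2 ∧ Φ (t n) * dist p.1 p.2 ^ N ≤ Φ (|u p.1 - u p.2|)} := by
        intro p hp
        obtain ⟨h1, h2, h3⟩ := hp
        rw [Prod.fst_swap, Prod.snd_swap] at h1 h2 h3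
        refine ⟨h2.symm, ?_⟩
        rw [dist_comm] at h3
        refine h3.trans (hmono _ _ (mul_nonneg (by linarith) (abs_nonneg _)) ?_)
        have hh := abs_sub_abs_le_abs_sub (u p.2) (u p.1)
        rw [abs_sub_comm (u p.1) (u p.2)]
        nlinarith [abs_nonneg (u p.2)]
      have hdisj : Disjoint (G n) (Prod.swap ⁻¹' (G n)) := by
        rw [Set.disjoint_left]
        intro p hp hp'
        obtain ⟨h1, h2, h3⟩ := hp
        obtain ⟨h1', h2', h3'⟩ := hp'
        rw [Prod.fst_swap, Prod.snd_swap] at h1' h2' h3'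
        have hb : |u p.1| ≤ δ * (δ * |u p.1|) :=
          h1'.trans (mul_le_mul_of_nonneg_left h1 hδ0.le)
        have hδ2 : δ * δ < 1 := by nlinarith
        have hux : |u p.1| = 0 := by
          rcases (abs_nonneg (u p.1)).eq_or_lt with hA | hA
          · exact hA.symm
          · nlinarith [mul_lt_mul_of_pos_right hδ2 hA]
        have hΦarg : Φ ((1 - δ) * |u p.1|) = 0 := by rw [hux, mul_zero, hΦ0]
        rw [hΦarg] at h3
        have hd : 0 < dist p.1 p.2 := dist_pos.2 h2
        have hΦtn : 0 < Φ (t n) := hpos _ (ht n)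
        nlinarith [pow_pos hd N]
      have hswapvol : volume (Prod.swap ⁻¹' (G n)) = volume (G n) := by
        rw [Measure.volume_eq_prod]
        exact Measure.measurePreserving_swap.measure_preimage (hGm n).nullMeasurableSet
      calc 2 * volume (G n) = volume (G n) + volume (Prod.swap ⁻¹' (G n)) := by
            rw [hswapvol, two_mul]
        _ = volume (G n ∪ Prod.swap ⁻¹' (G n)) :=
            (measure_union hdisj ((hGm n).preimage measurable_swap)).symm
        _ ≤ _ := measure_mono (Set.union_subset hsub1 hsub2)
    set g : ℕ → EuclideanSpace ℝ (Fin N) → ENNReal := fun n x =>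
      2 * ENNReal.ofReal (Φ (t n)) * volume (Prod.mk x ⁻¹' G n) with hgdef
    have hgmeas : ∀ n, Measurable (g n) := fun n =>
      measurable_const.mul (measurable_measure_prodMk_left (hGm n))
    have hint : ∀ n, ∫⁻ x, g n x ≤ F (t n) := by
      intro n
      rw [hgdef]
      simp only
      rw [lintegral_const_mul _ (measurable_measure_prodMk_left (hGm n))]
      have hT : ∫⁻ x, volume (Prod.mk x ⁻¹' G n) = volume (G n) := by
        rw [Measure.volume_eq_prod]
        exact (Measure.prod_apply (hGm n)).symm
      rw [hT, hFdef]
      calc 2 * ENNReal.ofReal (Φ (t n)) * volume (G n)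
          = ENNReal.ofReal (Φ (t n)) * (2 * volume (G n)) := by ring
        _ ≤ _ := mul_le_mul_right (h2vol n) _
    -- pointwise liminf lower bound
    have hpt : ∀ x : EuclideanSpace ℝ (Fin N),
        2 * ω * ENNReal.ofReal (Φ ((1 - δ) * |u x|)) ≤
        Filter.liminf (fun n => g n x) Filter.atTop := by
      intro x
      rcases (abs_nonneg (u x)).eq_or_lt with hm | hm
      · rw [← hm, mul_zero, hΦ0]
        simp
      · set m := |u x| with hmdef
        set q := Φ ((1 - δ) * m) with hqdef
        have hq0 : 0 ≤ q := hΦnn _ (mul_nonneg (by linarith) (abs_nonneg _))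
        set Bad : Set (EuclideanSpace ℝ (Fin N)) :=
          {x} ∪ {y : EuclideanSpace ℝ (Fin N) | δ * m < |u y|} with hBaddef
        set D := volume Bad with hDdef
        have hD_top : D ≠ ⊤ := by
          have hδm : 0 < δ * m := mul_pos hδ0 hm
          have hΦδm : 0 < Φ (δ * m) := hpos _ hδm
          have hof : ENNReal.ofReal (Φ (δ * m)) ≠ 0 := by
            simp only [ne_eq, ENNReal.ofReal_eq_zero, not_le]
            exact hΦδm
          have hmk := mul_meas_ge_le_lintegral₀ (μ := volume)
            hmeasI.aemeasurable (ENNReal.ofReal (Φ (δ * m)))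
          have hfin2 : volume {y : EuclideanSpace ℝ (Fin N) |
              ENNReal.ofReal (Φ (δ * m)) ≤ ENNReal.ofReal (Φ (|u y|))} < ⊤ := by
            by_contra h
            push_neg at h
            rw [top_le_iff] at h
            rw [h, ENNReal.mul_top hof] at hmk
            exact hfin.not_ge hmk
          have hsubB : {y : EuclideanSpace ℝ (Fin N) | δ * m < |u y|} ⊆
              {y : EuclideanSpace ℝ (Fin N) |
                ENNReal.ofReal (Φ (δ * m)) ≤ ENNReal.ofReal (Φ (|u y|))} := by
            intro y hy
            exact ENNReal.ofReal_le_ofReal (hmono _ _ hδm.le (le_of_lt hy))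
          have hs : volume ({x} : Set (EuclideanSpace ℝ (Fin N))) ≠ ⊤ :=
            isCompact_singleton.measure_lt_top.ne
          have hle : D ≤ volume ({x} : Set (EuclideanSpace ℝ (Fin N))) +
              volume {y : EuclideanSpace ℝ (Fin N) | δ * m < |u y|} :=
            measure_union_le _ _
          exact (hle.trans_lt (ENNReal.add_lt_top.2
            ⟨lt_top_iff_ne_top.2 hs, (measure_mono hsubB).trans_lt hfin2⟩)).ne
        -- slice inclusion
        have hslice : ∀ n, ball x ((q / Φ (t n)) ^ ((N : ℝ)⁻¹)) \ Bad ⊆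
            Prod.mk x ⁻¹' G n := by
          intro n y hy
          obtain ⟨hball, hnB⟩ := hy
          have hyx : y ≠ x := fun h => hnB (Or.inl h)
          have huy : |u y| ≤ δ * m := by
            by_contra h
            exact hnB (Or.inr (by simpa using lt_of_not_ge h))
          have hΦtn : 0 < Φ (t n) := hpos _ (ht n)
          have hqdiv : (0:ℝ) ≤ q / Φ (t n) := by positivity
          have hrN : ((q / Φ (t n)) ^ ((N : ℝ)⁻¹)) ^ N = q / Φ (t n) := by
            rw [← Real.rpow_natCast ((q / Φ (t n)) ^ ((N : ℝ)⁻¹)) N,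
              ← Real.rpow_mul hqdiv]
            rw [inv_mul_cancel₀ (by exact_mod_cast hN.ne' : (N:ℝ) ≠ 0)]
            exact Real.rpow_one _
          refine ⟨huy, hyx.symm, ?_⟩
          have hd : dist x y < (q / Φ (t n)) ^ ((N : ℝ)⁻¹) := by
            rw [dist_comm]; exact mem_ball.1 hball
          have hdN : dist x y ^ N ≤ q / Φ (t n) := by
            rw [← hrN]
            exact pow_le_pow_left₀ dist_nonneg hd.le N
          calc Φ (t n) * dist x y ^ N ≤ Φ (t n) * (q / Φ (t n)) := by nlinarith
            _ = q := by rw [mul_comm]; exact div_mul_cancel₀ q hΦtn.ne'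
        -- volume lower bound per n
        have hlow : ∀ n, 2 * (ENNReal.ofReal q * ω - ENNReal.ofReal (Φ (t n)) * D) ≤
            g n x := by
          intro n
          have hΦtn : 0 < Φ (t n) := hpos _ (ht n)
          have hqdiv : (0:ℝ) ≤ q / Φ (t n) := by positivity
          have hrnn : (0:ℝ) ≤ (q / Φ (t n)) ^ ((N : ℝ)⁻¹) := Real.rpow_nonneg hqdiv _
          have hrN : ((q / Φ (t n)) ^ ((N : ℝ)⁻¹)) ^ N = q / Φ (t n) := by
            rw [← Real.rpow_natCast ((q / Φ (t n)) ^ ((N : ℝ)⁻¹)) N,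
              ← Real.rpow_mul hqdiv]
            rw [inv_mul_cancel₀ (by exact_mod_cast hN.ne' : (N:ℝ) ≠ 0)]
            exact Real.rpow_one _
          have hballvol : volume (ball x ((q / Φ (t n)) ^ ((N : ℝ)⁻¹))) =
              ENNReal.ofReal (((q / Φ (t n)) ^ ((N : ℝ)⁻¹)) ^ N) * ω := by
            rw [hωdef, Measure.addHaar_ball volume x hrnn, finrank_euclideanSpace_fin]
          have hprod : ENNReal.ofReal (Φ (t n)) *
              volume (ball x ((q / Φ (t n)) ^ ((N : ℝ)⁻¹))) = ENNReal.ofReal q * ω := by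
            rw [hballvol, hrN, ← mul_assoc, ← ENNReal.ofReal_mul hΦtn.le]
            rw [mul_comm (Φ (t n)), div_mul_cancel₀ q hΦtn.ne']
          have hstep : ENNReal.ofReal q * ω - ENNReal.ofReal (Φ (t n)) * D ≤
              ENNReal.ofReal (Φ (t n)) * volume (Prod.mk x ⁻¹' G n) := by
            calc ENNReal.ofReal q * ω - ENNReal.ofReal (Φ (t n)) * D
                = ENNReal.ofReal (Φ (t n)) *
                    volume (ball x ((q / Φ (t n)) ^ ((N : ℝ)⁻¹))) -
                  ENNReal.ofReal (Φ (t n)) * D := by rw [hprod]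
              _ ≤ ENNReal.ofReal (Φ (t n)) *
                  (volume (ball x ((q / Φ (t n)) ^ ((N : ℝ)⁻¹))) - D) := by
                  rw [tsub_le_iff_right]
                  calc ENNReal.ofReal (Φ (t n)) *
                      volume (ball x ((q / Φ (t n)) ^ ((N : ℝ)⁻¹)))
                      ≤ ENNReal.ofReal (Φ (t n)) *
                        ((volume (ball x ((q / Φ (t n)) ^ ((N : ℝ)⁻¹))) - D) + D) := by
                        gcongr
                        exact le_tsub_add
                    _ = ENNReal.ofReal (Φ (t n)) *
                        (volume (ball x ((q / Φ (t n)) ^ ((N : ℝ)⁻¹))) - D) +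
                        ENNReal.ofReal (Φ (t n)) * D := by ring
              _ ≤ ENNReal.ofReal (Φ (t n)) *
                  volume (ball x ((q / Φ (t n)) ^ ((N : ℝ)⁻¹)) \ Bad) := by
                  gcongr
                  rw [tsub_le_iff_right]
                  calc volume (ball x ((q / Φ (t n)) ^ ((N : ℝ)⁻¹)))
                      ≤ volume ((ball x ((q / Φ (t n)) ^ ((N : ℝ)⁻¹)) \ Bad) ∪ Bad) :=
                        measure_mono (fun y hy => by
                          by_cases hB : y ∈ Bad
                          · exact Or.inr hB
                          · exact Or.inl ⟨hy, hB⟩)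
                    _ ≤ _ := measure_union_le _ _
              _ ≤ ENNReal.ofReal (Φ (t n)) * volume (Prod.mk x ⁻¹' G n) :=
                mul_le_mul_right (measure_mono (hslice n)) _
          calc 2 * (ENNReal.ofReal q * ω - ENNReal.ofReal (Φ (t n)) * D)
              ≤ 2 * (ENNReal.ofReal (Φ (t n)) * volume (Prod.mk x ⁻¹' G n)) :=
                mul_le_mul_right hstep 2
            _ = g n x := by rw [hgdef]; ring
        have htendlow : Filter.Tendsto
            (fun n => 2 * (ENNReal.ofReal q * ω - ENNReal.ofReal (Φ (t n)) * D))
            Filter.atTop (nhds (2 * (ENNReal.ofReal q * ω))) := by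
          have h1 : Filter.Tendsto (fun n => ENNReal.ofReal (Φ (t n)) * D)
              Filter.atTop (nhds 0) := by
            have := ENNReal.Tendsto.mul_const hΦt0 (Or.inr hD_top)
            simpa using this
          have h2 : Filter.Tendsto
              (fun n => ENNReal.ofReal q * ω - ENNReal.ofReal (Φ (t n)) * D)
              Filter.atTop (nhds (ENNReal.ofReal q * ω - 0)) :=
            ENNReal.Tendsto.sub tendsto_const_nhds h1
              (Or.inl (ENNReal.mul_ne_top ENNReal.ofReal_ne_top hω_top))
          rw [tsub_zero] at h2
          exact ENNReal.Tendsto.const_mul h2 (Or.inr (by norm_num))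
        calc 2 * ω * ENNReal.ofReal (Φ ((1 - δ) * |u x|))
            = 2 * (ENNReal.ofReal q * ω) := by rw [hqdef, hmdef]; ring
          _ = Filter.liminf
              (fun n => 2 * (ENNReal.ofReal q * ω - ENNReal.ofReal (Φ (t n)) * D))
              Filter.atTop := (htendlow.liminf_eq).symm
          _ ≤ Filter.liminf (fun n => g n x) Filter.atTop :=
            Filter.liminf_le_liminf (Filter.Eventually.of_forall hlow)
    calc 2 * ω * (∫⁻ x, ENNReal.ofReal (Φ ((1 - δ) * |u x|)))
        = ∫⁻ x, 2 * ω * ENNReal.ofReal (Φ ((1 - δ) * |u x|)) := by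
          rw [lintegral_const_mul _ hfm]
      _ ≤ ∫⁻ x, Filter.liminf (fun n => g n x) Filter.atTop := lintegral_mono hpt
      _ ≤ Filter.liminf (fun n => ∫⁻ x, g n x) Filter.atTop := lintegral_liminf_le hgmeas
      _ ≤ Filter.liminf (fun n => F (t n)) Filter.atTop :=
        Filter.liminf_le_liminf (Filter.Eventually.of_forall hint)
  -- from the sequential lemma to the filter liminf, for each δ_j = 1/(j+2)
  have hj : ∀ j : ℕ, 2 * ω * (∫⁻ x, ENNReal.ofReal (Φ ((1 - 1/((j:ℝ)+2)) * |u x|))) ≤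
      Filter.liminf F (nhdsWithin 0 (Ioi 0)) := by
    intro j
    by_contra hc
    push_neg at hc
    obtain ⟨b, hb1, hb2⟩ := exists_between hc
    have hfreq : ∃ᶠ t' in nhdsWithin (0:ℝ) (Ioi 0), F t' < b :=
      Filter.frequently_lt_of_liminf_lt (h := hb1)
    have hfreq2 : ∃ᶠ t' in nhdsWithin (0:ℝ) (Ioi 0), F t' < b ∧ t' ∈ Ioi (0:ℝ) :=
      hfreq.and_eventually eventually_mem_nhdsWithin
    obtain ⟨ts, hts, hP⟩ := Filter.exists_seq_forall_of_frequently hfreq2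
    have hδ0 : (0:ℝ) < 1/((j:ℝ)+2) := by positivity
    have hδ1 : 1/((j:ℝ)+2) < 1 := by
      rw [div_lt_one (by positivity)]
      have : (0:ℝ) ≤ (j:ℝ) := Nat.cast_nonneg j
      linarith
    have hkey := key (1/((j:ℝ)+2)) hδ0 hδ1 ts (fun n => (hP n).2)
      (hts.mono_right nhdsWithin_le_nhds)
    have hup : Filter.liminf (fun n => F (ts n)) Filter.atTop ≤ b :=
      calc Filter.liminf (fun n => F (ts n)) Filter.atTop
          ≤ Filter.liminf (fun _ : ℕ => b) Filter.atTop :=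
            Filter.liminf_le_liminf (Filter.Eventually.of_forall fun n => (hP n).1.le)
        _ = b := Filter.liminf_const b
    exact absurd (hkey.trans hup) (not_le.2 hb2)
  -- pass to the limit j → ∞
  have htendj : Filter.Tendsto
      (fun j : ℕ => 2 * ω * (∫⁻ x, ENNReal.ofReal (Φ ((1 - 1/((j:ℝ)+2)) * |u x|))))
      Filter.atTop (nhds (2 * ω * (∫⁻ x, ENNReal.ofReal (Φ (|u x|))))) := by
    refine ENNReal.Tendsto.const_mul ?_ (Or.inr ?_)
    · apply lintegral_tendsto_of_tendsto_of_monotone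
      · intro j
        have h1 : 1/((j:ℝ)+2) ≤ 1 := by
          rw [div_le_one (by positivity)]
          have : (0:ℝ) ≤ (j:ℝ) := Nat.cast_nonneg j
          linarith
        exact (((hcont (1 - 1/((j:ℝ)+2)) (by linarith)).measurable.comp
          hu).ennreal_ofReal).aemeasurable
      · refine Filter.Eventually.of_forall fun x => ?_
        apply monotone_nat_of_le_succ
        intro j
        apply ENNReal.ofReal_le_ofReal
        have h1 : 1/((j:ℝ)+2) ≤ 1 := by
          rw [div_le_one (by positivity)]
          have : (0:ℝ) ≤ (j:ℝ) := Nat.cast_nonneg j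
          linarith
        apply hmono _ _ (mul_nonneg (by linarith) (abs_nonneg (u x)))
        apply mul_le_mul_of_nonneg_right _ (abs_nonneg (u x))
        have h2 : 1/((j:ℝ)+1+2) ≤ 1/((j:ℝ)+2) := by
          apply one_div_le_one_div_of_le (by positivity)
          linarith
        push_cast
        linarith
      · refine Filter.Eventually.of_forall fun x => ?_
        have harg : Filter.Tendsto (fun j : ℕ => (1 - 1/((j:ℝ)+2)) * |u x|)
            Filter.atTop (nhds (|u x|)) := by
          have h0 : Filter.Tendsto (fun j : ℕ => ((j:ℝ)+2)) Filter.atTop Filter.atTop :=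
            Filter.tendsto_atTop_add_const_right _ 2 tendsto_natCast_atTop_atTop
          have h1 : Filter.Tendsto (fun j : ℕ => 1/((j:ℝ)+2)) Filter.atTop (nhds 0) := by
            simpa [one_div, Pi.inv_def] using h0.inv_tendsto_atTop
          have h2 : Filter.Tendsto (fun j : ℕ => 1 - 1/((j:ℝ)+2)) Filter.atTop
              (nhds 1) := by
            have := (tendsto_const_nhds (x := (1:ℝ))
              (f := (Filter.atTop : Filter ℕ))).sub h1
            simpa using this
          have := h2.mul_const (|u x|)
          simpa using this
        have hargIci : Filter.Tendsto (fun j : ℕ => (1 - 1/((j:ℝ)+2)) * |u x|)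
            Filter.atTop (nhdsWithin (|u x|) (Ici 0)) := by
          rw [tendsto_nhdsWithin_iff]
          refine ⟨harg, Filter.Eventually.of_forall fun j => ?_⟩
          have h1 : 1/((j:ℝ)+2) ≤ 1 := by
            rw [div_le_one (by positivity)]
            have : (0:ℝ) ≤ (j:ℝ) := Nat.cast_nonneg j
            linarith
          have h2 : (0:ℝ) ≤ (1 - 1/((j:ℝ)+2)) := by linarith
          exact mem_Ici.2 (mul_nonneg h2 (abs_nonneg (u x)))
        have hΦtend : Filter.Tendsto (fun j : ℕ => Φ ((1 - 1/((j:ℝ)+2)) * |u x|))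
            Filter.atTop (nhds (Φ (|u x|))) :=
          (hΦc (|u x|) (mem_Ici.2 (abs_nonneg (u x)))).tendsto.comp hargIci
        exact ENNReal.tendsto_ofReal hΦtend
    · exact ENNReal.mul_ne_top (by norm_num) hω_top
  exact le_of_tendsto htendj (Filter.Eventually.of_forall hj)
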